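/- Let d ≥ 1, a > 0 and x ∈ (d − 1, d]. Then ∫_{ℝ∖(−d,d)} e^{−2a|y−x|}/|y − x| dy ≤ e^{−2ad} cosh(2ax)/a + ln(d + 1 − x) − ln(d − x). -/

import Mathlib

open Real MeasureTheory Set

lemma intExpIoi (b c : ℝ) (hb : 0 < b) :
    ∫ y in Set.Ioi c, Real.exp (-b * y) = Real.exp (-b * c) / b := by
  have h := MeasureTheory.integral_comp_mul_left_Ioi (fun u => Real.exp (-u)) c hb
  simp only [smul_eq_mul, integral_exp_neg_Ioi] at h
  simp_rw [show ∀ y : ℝ, -b * y = -(b * y) by intro y; ring] at *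
  rw [h]; field_simp

lemma intExpIic (b c : ℝ) (hb : 0 < b) :
    ∫ y in Set.Iic c, Real.exp (b * y) = Real.exp (b * c) / b := by
  have h := integral_comp_neg_Iic c (fun u => Real.exp (-b * u))
  simp_rw [show ∀ y : ℝ, -b * -y = b * y by intro y; ring] at h
  rw [h, intExpIoi b (-c) hb]
  ring_nf

lemma intOnExpIic (b c : ℝ) (hb : 0 < b) :
    IntegrableOn (fun y => Real.exp (b * y)) (Set.Iic c) := by
  refine (integrable_indicator_iff measurableSet_Iic).1 ?_
  have hG : Integrable ((Set.Ici (-c)).indicator (fun y => Real.exp (-b * y))) := by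
    rw [integrable_indicator_iff measurableSet_Ici, integrableOn_Ici_iff_integrableOn_Ioi]
    exact exp_neg_integrableOn_Ioi _ hb
  have h2 := hG.comp_neg
  refine h2.congr (Filter.Eventually.of_forall fun u => ?_)
  simp only [Set.indicator_apply, Set.mem_Iic, Set.mem_Ici, neg_le_neg_iff, le_neg]
  by_cases hu : u ≤ c
  · rw [if_pos hu, if_pos (by linarith), show -b * -u = b * u by ring]
  · rw [if_neg hu, if_neg (by intro h; exact hu (by linarith))]

/-- exterior integral estimate for x near the boundary, with a
logarithmic contribution. -/
theorem stmt16 (a d : ℝ) (ha : 0 < a) (hd : 1 ≤ d)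
    (x : ℝ) (hx : x ∈ Set.Ioc (d - 1) d) :
    ∫ y in (Set.Ioo (-d) d)ᶜ, Real.exp (-2 * a * |y - x|) / |y - x| ≤
      Real.exp (-2 * a * d) * Real.cosh (2 * a * x) / a +
        (Real.log (d + 1 - x) - Real.log (d - x)) := by
  obtain ⟨hx1, hx2⟩ := hx
  have ha2 : (0:ℝ) < 2 * a := by linarith
  set f : ℝ → ℝ := fun y => Real.exp (-2 * a * |y - x|) / |y - x| with hf
  have hfnn : ∀ y, 0 ≤ f y := fun y => div_nonneg (Real.exp_pos _).le (abs_nonneg _)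
  have hfm : Measurable f := by fun_prop
  rcases eq_or_lt_of_le hx2 with heq | hxd
  · -- case x = d : the integrand is not integrable, both sides degenerate
    subst heq
    have hni : ¬ IntegrableOn f (Set.Ioo (-x) x)ᶜ := by
      intro h
      have h1 : IntegrableOn f (Set.Ioo x (x+1)) := by
        apply h.mono_set
        intro y hy
        simp only [Set.mem_Ioo, Set.mem_compl_iff, not_and, not_lt] at hy ⊢
        intro _; linarith [hy.1]
      have h2 : IntegrableOn (fun y => (y - x)⁻¹) (Set.Ioo x (x+1)) := by
        refine Integrable.mono' (h1.const_mul (Real.exp (2*a))) ((measurable_id.sub_const x).inv.aestronglyMeasurable.restrict) ?_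
        rw [ae_restrict_iff' measurableSet_Ioo]
        filter_upwards with y hy
        obtain ⟨hy1, hy2⟩ := hy
        have h0 : 0 < y - x := by linarith
        have habs : |y - x| = y - x := abs_of_pos h0
        have hexp : 1 ≤ Real.exp (2*a) * Real.exp (-2 * a * (y-x)) := by
          rw [← Real.exp_add, ← Real.exp_zero]
          apply Real.exp_le_exp.2
          nlinarith
        rw [Real.norm_eq_abs, abs_of_nonneg (inv_nonneg.2 h0.le), hf]
        simp only [habs, div_eq_mul_inv]
        calc (y - x)⁻¹ = 1 * (y - x)⁻¹ := (one_mul _).symm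
          _ ≤ (Real.exp (2*a) * Real.exp (-2 * a * (y-x))) * (y - x)⁻¹ :=
              mul_le_mul_of_nonneg_right hexp (inv_nonneg.2 h0.le)
          _ = Real.exp (2*a) * (Real.exp (-2 * a * (y-x)) * (y - x)⁻¹) := by ring
      have h3 := (integrable_indicator_iff measurableSet_Ioo).2 h2
      have h4 := h3.comp_add_right x
      have h5 : (fun u => (Set.Ioo x (x+1)).indicator (fun y => (y - x)⁻¹) (u + x))
          = (Set.Ioo (0:ℝ) 1).indicator (fun y => y⁻¹) := by
        funext u
        simp only [Set.indicator_apply, Set.mem_Ioo, add_sub_cancel_right]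
        by_cases hu : 0 < u ∧ u < 1
        · rw [if_pos ⟨by linarith [hu.1], by linarith [hu.2]⟩, if_pos hu]
        · rw [if_neg, if_neg hu]
          rintro ⟨c1, c2⟩; exact hu ⟨by linarith, by linarith⟩
      rw [h5] at h4
      have h6 : IntegrableOn (fun y : ℝ => y⁻¹) (Set.Ioo (0:ℝ) 1) :=
        (integrable_indicator_iff measurableSet_Ioo).1 h4
      have h7 : IntegrableOn (fun y : ℝ => y ^ (-1:ℝ)) (Set.Ioo (0:ℝ) 1) := by
        refine h6.congr_fun (fun y hy => ?_) measurableSet_Ioo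
        rw [Real.rpow_neg_one]
      have := (intervalIntegral.integrableOn_Ioo_rpow_iff zero_lt_one).1 h7
      linarith
    rw [integral_undef hni]
    have hpos : 0 ≤ Real.exp (-2*a*x) * Real.cosh (2*a*x) / a := by positivity
    simp only [sub_self, Real.log_zero, show x + 1 - x = 1 by ring, Real.log_one]
    linarith
  · -- main case x < d
    have hdx : 0 < d - x := by linarith
    have hx0 : 0 < x := by linarith
    have hSeq : (Set.Ioo (-d) d)ᶜ = Set.Iic (-d) ∪ Set.Ici d := by
      ext y
      simp only [Set.mem_compl_iff, Set.mem_Ioo, not_and, not_lt, Set.mem_union,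
        Set.mem_Iic, Set.mem_Ici]
      constructor
      · intro h
        by_cases h1 : -d < y
        · right; exact h h1
        · left; linarith
      · rintro (h | h) <;> intro h2 <;> linarith
    have hIci : Set.Ici d = Set.Ico d (d+1) ∪ Set.Ici (d+1) :=
      (Set.Ico_union_Ici_eq_Ici (by linarith)).symm
    -- bounding functions
    set g1 : ℝ → ℝ := fun y => Real.exp (-2*a*x) * Real.exp (2*a*y) with hg1
    set g2 : ℝ → ℝ := fun y => (y - x)⁻¹ with hg2
    set g3 : ℝ → ℝ := fun y => Real.exp (2*a*x) * Real.exp (-(2*a)*y) with hg3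
    have hg1int : IntegrableOn g1 (Set.Iic (-d)) :=
      (intOnExpIic (2*a) (-d) ha2).const_mul _
    have hg2cont : ContinuousOn g2 (Set.Icc d (d+1)) := by
      apply ContinuousOn.inv₀ (by fun_prop)
      intro y hy
      have : x < y := lt_of_lt_of_le hxd hy.1
      exact sub_ne_zero.2 (ne_of_gt this)
    have hg2int : IntegrableOn g2 (Set.Ico d (d+1)) :=
      (hg2cont.integrableOn_Icc).mono_set Set.Ico_subset_Icc_self
    have hg3int : IntegrableOn g3 (Set.Ici (d+1)) := by
      have h := (integrableOn_Ici_iff_integrableOn_Ioi (by simp)).2 (exp_neg_integrableOn_Ioi (d+1) ha2)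
      exact h.const_mul _
    -- pointwise bounds
    have hb1 : ∀ y ∈ Set.Iic (-d), f y ≤ g1 y := by
      intro y hy
      simp only [Set.mem_Iic] at hy
      have h1 : y < x := by linarith
      have habs : |y - x| = x - y := by
        rw [abs_sub_comm]; exact abs_of_pos (by linarith)
      calc f y = Real.exp (-2*a*(x-y)) / (x - y) := by
            simp only [hf, habs]
        _ ≤ Real.exp (-2*a*(x-y)) := div_le_self (Real.exp_pos _).le (by linarith)
        _ = g1 y := by simp only [hg1]; rw [← Real.exp_add]; congr 1; ring
    have hb2 : ∀ y ∈ Set.Ico d (d+1), f y ≤ g2 y := by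
      intro y hy
      obtain ⟨hy1, hy2⟩ := hy
      have h0 : 0 < y - x := by linarith
      have habs : |y - x| = y - x := abs_of_pos h0
      have hexp : Real.exp (-2*a*(y-x)) ≤ 1 := by
        rw [← Real.exp_zero]; apply Real.exp_le_exp.2; nlinarith
      calc f y = Real.exp (-2*a*(y-x)) / (y - x) := by
            simp only [hf, habs]
        _ ≤ 1 / (y - x) := by gcongr
        _ = g2 y := (one_div _).trans rfl
    have hb3 : ∀ y ∈ Set.Ici (d+1), f y ≤ g3 y := by
      intro y hy
      simp only [Set.mem_Ici] at hy
      have h0 : 0 < y - x := by linarith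
      have habs : |y - x| = y - x := abs_of_pos h0
      calc f y = Real.exp (-2*a*(y-x)) / (y - x) := by
            simp only [hf, habs]
        _ ≤ Real.exp (-2*a*(y-x)) := div_le_self (Real.exp_pos _).le (by linarith)
        _ = g3 y := by simp only [hg3]; rw [← Real.exp_add]; congr 1; ring
    -- integrability of f on the pieces
    have hint1 : IntegrableOn f (Set.Iic (-d)) := by
      refine Integrable.mono' hg1int hfm.aestronglyMeasurable.restrict ?_
      rw [ae_restrict_iff' measurableSet_Iic]
      filter_upwards with y hy
      rw [Real.norm_eq_abs, abs_of_nonneg (hfnn y)]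
      exact hb1 y hy
    have hint2 : IntegrableOn f (Set.Ico d (d+1)) := by
      have hc : ContinuousOn f (Set.Icc d (d+1)) := by
        apply ContinuousOn.div (by fun_prop) (by fun_prop)
        intro y hy
        have : x < y := lt_of_lt_of_le hxd hy.1
        exact abs_ne_zero.2 (sub_ne_zero.2 (ne_of_gt this))
      exact (hc.integrableOn_Icc).mono_set Set.Ico_subset_Icc_self
    have hint3 : IntegrableOn f (Set.Ici (d+1)) := by
      refine Integrable.mono' hg3int hfm.aestronglyMeasurable.restrict ?_
      rw [ae_restrict_iff' measurableSet_Ici]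
      filter_upwards with y hy
      rw [Real.norm_eq_abs, abs_of_nonneg (hfnn y)]
      exact hb3 y hy
    -- split the integral
    have hdisj1 : Disjoint (Set.Iic (-d)) (Set.Ici d) := by
      rw [Set.disjoint_left]
      intro y hy hy'
      simp only [Set.mem_Iic] at hy
      simp only [Set.mem_Ici] at hy'
      linarith
    have hdisj2 : Disjoint (Set.Ico d (d+1)) (Set.Ici (d+1)) := by
      rw [Set.disjoint_left]
      intro y hy hy'
      simp only [Set.mem_Ici] at hy'
      linarith [hy.2]
    have hintIci : IntegrableOn f (Set.Ici d) := by
      rw [hIci]; exact hint2.union hint3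
    rw [hSeq, setIntegral_union hdisj1 measurableSet_Ici hint1 hintIci, hIci,
      setIntegral_union hdisj2 measurableSet_Ici hint2 hint3]
    -- bound each piece
    have hB1 : ∫ y in Set.Iic (-d), f y ≤ Real.exp (-2*a*x) * Real.exp (-2*a*d) / (2*a) := by
      refine le_trans (setIntegral_mono_on hint1 hg1int measurableSet_Iic hb1) ?_
      simp only [hg1]
      rw [MeasureTheory.integral_const_mul, intExpIic (2*a) (-d) ha2,
        show (2*a) * (-d) = -2*a*d by ring, mul_div_assoc]
    have hB2 : ∫ y in Set.Ico d (d+1), f y ≤ Real.log (d+1-x) - Real.log (d-x) := by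
      refine le_trans (setIntegral_mono_on hint2 hg2int measurableSet_Ico hb2) ?_
      have hval : ∫ y in Set.Ico d (d+1), g2 y = Real.log (d+1-x) - Real.log (d-x) := by
        rw [MeasureTheory.integral_Ico_eq_integral_Ioo, ← MeasureTheory.integral_Ioc_eq_integral_Ioo,
          ← intervalIntegral.integral_of_le (by linarith : d ≤ d+1)]
        simp only [hg2]
        rw [intervalIntegral.integral_comp_sub_right (fun u => u⁻¹) x]
        rw [integral_inv (by
          intro hmem
          rw [Set.mem_uIcc] at hmem
          rcases hmem with ⟨h1, h2⟩ | ⟨h1, h2⟩ <;> linarith)]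
        rw [Real.log_div (by linarith) (by linarith)]
      rw [hval]
    have hB3 : ∫ y in Set.Ici (d+1), f y ≤ Real.exp (2*a*x) * Real.exp (-2*a*(d+1)) / (2*a) := by
      refine le_trans (setIntegral_mono_on hint3 hg3int measurableSet_Ici hb3) ?_
      simp only [hg3]
      rw [MeasureTheory.integral_Ici_eq_integral_Ioi, MeasureTheory.integral_const_mul,
        intExpIoi (2*a) (d+1) ha2,
        show -(2*a) * (d+1) = -2*a*(d+1) by ring, mul_div_assoc]
    have h3le : Real.exp (2*a*x) * Real.exp (-2*a*(d+1)) / (2*a)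
        ≤ Real.exp (2*a*x) * Real.exp (-2*a*d) / (2*a) := by
      have : Real.exp (-2*a*(d+1)) ≤ Real.exp (-2*a*d) := by
        apply Real.exp_le_exp.2; nlinarith
      gcongr
    have key : Real.exp (-2*a*x) * Real.exp (-2*a*d) / (2*a)
        + Real.exp (2*a*x) * Real.exp (-2*a*d) / (2*a)
        = Real.exp (-2 * a * d) * Real.cosh (2 * a * x) / a := by
      rw [Real.cosh_eq]
      rw [show -(2*a*x) = -2*a*x by ring]
      field_simp
      ring
    linarith [hB1, hB2, hB3, h3le]
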